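/- Let (Ω, ℱ, μ) be a probability space, m ⊆ m' ⊆ ℱ sub-σ-algebras, and η, κ ≥ 0. Let λ be a nonnegative, m-measurable, square-integrable random variable; let Z be a square-integrable, m'-measurable random variable that is conditionally Poisson given m with intensity λ; let W be a nonnegative, square-integrable, m'-measurable random variable independent of the σ-algebra generated by m and Z; set λ' := W + η·Z + κ·λ; and let Z' be a square-integrable random variable with E[Z' | m'] = λ' almost surely. Then Cov(Z, Z') = (η + κ)·Var(Z) − κ·E[Z]. -/

import Mathlib

open MeasureTheory ProbabilityTheory Real

lemma l2_mul_integrable {Ω : Type*} {mΩ : MeasurableSpace Ω} {μ : Measure Ω} {f g : Ω → ℝ}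
    (hf : MemLp f 2 μ) (hg : MemLp g 2 μ) : Integrable (fun ω => f ω * g ω) μ := by
  have := hg.smul (φ := f) hf (r := 1)
  exact memLp_one_iff_integrable.mp this

theorem spingarch_lag_one_autocovariance
    {Ω : Type*} [F : MeasurableSpace Ω] (μ : Measure Ω) [IsProbabilityMeasure μ]
    (m m' : MeasurableSpace Ω) (hmm' : m ≤ m') (hm' : m' ≤ F)
    (η κ : ℝ) (hη : 0 ≤ η) (hκ : 0 ≤ κ)
    (lam Z W Z' : Ω → ℝ)
    (hlam_nonneg : ∀ ω, 0 ≤ lam ω)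
    (hlam_meas : StronglyMeasurable[m] lam)
    (hlam_L2 : MemLp lam 2 μ)
    (hZ_L2 : MemLp Z 2 μ)
    (hZ_meas : StronglyMeasurable[m'] Z)
    (hZ_mean : μ[Z | m] =ᵐ[μ] lam)
    (hZ_sq : μ[fun ω => Z ω ^ 2 | m] =ᵐ[μ] fun ω => lam ω + lam ω ^ 2)
    (hW_nonneg : ∀ ω, 0 ≤ W ω)
    (hW_L2 : MemLp W 2 μ)
    (hW_meas : StronglyMeasurable[m'] W)
    (hW_indep : Indep (MeasurableSpace.comap W Real.measurableSpace)
      (m ⊔ MeasurableSpace.comap Z Real.measurableSpace) μ)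
    (lam' : Ω → ℝ) (hlam'_def : lam' = fun ω => W ω + η * Z ω + κ * lam ω)
    (hZ'_L2 : MemLp Z' 2 μ)
    (hZ'_mean : μ[Z' | m'] =ᵐ[μ] lam') :
    (∫ ω, Z ω * Z' ω ∂μ) - (∫ ω, Z ω ∂μ) * (∫ ω, Z' ω ∂μ)
      = (η + κ) * variance Z μ - κ * (∫ ω, Z ω ∂μ) := by
  have hm : m ≤ F := hmm'.trans hm'
  have hZ_int : Integrable Z μ := hZ_L2.integrable one_le_two
  have hZ'_int : Integrable Z' μ := hZ'_L2.integrable one_le_two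
  have hW_int : Integrable W μ := hW_L2.integrable one_le_two
  have hlam_int : Integrable lam μ := hlam_L2.integrable one_le_two
  have hZZ'_int : Integrable (fun ω => Z ω * Z' ω) μ := l2_mul_integrable hZ_L2 hZ'_L2
  have hZW_int : Integrable (fun ω => Z ω * W ω) μ := l2_mul_integrable hZ_L2 hW_L2
  have hZlam_int : Integrable (fun ω => Z ω * lam ω) μ := l2_mul_integrable hZ_L2 hlam_L2
  have hlamsq_int : Integrable (fun ω => lam ω ^ 2) μ := hlam_L2.integrable_sq
  have hZsq_int : Integrable (fun ω => Z ω ^ 2) μ := hZ_L2.integrable_sq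
  -- E[Z] = E[lam]
  have hEZ : ∫ ω, Z ω ∂μ = ∫ ω, lam ω ∂μ := by
    rw [← integral_condExp hm (f := Z)]
    exact integral_congr_ae hZ_mean
  -- E[Z^2] = E[lam] + E[lam^2]
  have hEZsq : ∫ ω, Z ω ^ 2 ∂μ = (∫ ω, lam ω ∂μ) + ∫ ω, lam ω ^ 2 ∂μ := by
    rw [← integral_condExp hm (f := fun ω => Z ω ^ 2), integral_congr_ae hZ_sq,
      integral_add hlam_int hlamsq_int]
  -- E[Z * lam] = E[lam^2]
  have hEZlam : ∫ ω, Z ω * lam ω ∂μ = ∫ ω, lam ω ^ 2 ∂μ := by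
    have h1 : μ[fun ω => lam ω * Z ω | m] =ᵐ[μ] fun ω => lam ω * (μ[Z|m]) ω := by
      have := condExp_mul_of_stronglyMeasurable_left (μ := μ) hlam_meas
        (by rw [mul_comm]; exact hZlam_int) hZ_int
      exact this
    have h2 : μ[fun ω => lam ω * Z ω | m] =ᵐ[μ] fun ω => lam ω ^ 2 := by
      filter_upwards [h1, hZ_mean] with ω h1 h2
      rw [h1, h2, sq]
    calc ∫ ω, Z ω * lam ω ∂μ = ∫ ω, lam ω * Z ω ∂μ := by simp [mul_comm]
      _ = ∫ ω, (μ[fun ω => lam ω * Z ω | m]) ω ∂μ :=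
          (integral_condExp hm (f := fun ω => lam ω * Z ω)).symm
      _ = ∫ ω, lam ω ^ 2 ∂μ := integral_congr_ae h2
  -- E[Z * W] = E[Z] * E[W]
  have hIndepFun : IndepFun Z W μ := by
    refine (IndepFun_iff_Indep Z W μ).mpr ?_
    exact (indep_of_indep_of_le_right hW_indep le_sup_right).symm
  have hEZW : ∫ ω, Z ω * W ω ∂μ = (∫ ω, Z ω ∂μ) * ∫ ω, W ω ∂μ :=
    hIndepFun.integral_mul_eq_mul_integral hZ_int.aestronglyMeasurable hW_int.aestronglyMeasurable
  -- E[Z * Z'] = E[Z * lam']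
  have hZlam'_int : Integrable (fun ω => Z ω * lam' ω) μ := by
    rw [hlam'_def]
    have : (fun ω => Z ω * (W ω + η * Z ω + κ * lam ω))
        = fun ω => Z ω * W ω + η * Z ω ^ 2 + κ * (Z ω * lam ω) := by
      funext ω; ring
    rw [this]
    exact ((hZW_int.add (hZsq_int.const_mul η)).add (hZlam_int.const_mul κ))
  have hEZZ' : ∫ ω, Z ω * Z' ω ∂μ = ∫ ω, Z ω * lam' ω ∂μ := by
    have h1 : μ[fun ω => Z ω * Z' ω | m'] =ᵐ[μ] fun ω => Z ω * (μ[Z'|m']) ω := by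
      have := condExp_mul_of_stronglyMeasurable_left (μ := μ) hZ_meas
        (by exact hZZ'_int) hZ'_int
      exact this
    have h2 : μ[fun ω => Z ω * Z' ω | m'] =ᵐ[μ] fun ω => Z ω * lam' ω := by
      filter_upwards [h1, hZ'_mean] with ω h1 h2
      rw [h1, h2]
    rw [← integral_condExp hm' (f := fun ω => Z ω * Z' ω)]
    exact integral_congr_ae h2
  -- E[Z']
  have hEZ' : ∫ ω, Z' ω ∂μ
      = (∫ ω, W ω ∂μ) + η * (∫ ω, Z ω ∂μ) + κ * ∫ ω, lam ω ∂μ := by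
    rw [← integral_condExp hm' (f := Z'), integral_congr_ae hZ'_mean, hlam'_def]
    rw [integral_add
        (by exact hW_int.add (hZ_int.const_mul η) :
          Integrable (fun ω => W ω + η * Z ω) μ)
        (by exact hlam_int.const_mul κ : Integrable (fun ω => κ * lam ω) μ),
      integral_add hW_int
        (by exact hZ_int.const_mul η : Integrable (fun ω => η * Z ω) μ),
      integral_const_mul, integral_const_mul]
  -- expand E[Z * lam']
  have hexp : ∫ ω, Z ω * lam' ω ∂μ
      = (∫ ω, Z ω ∂μ) * (∫ ω, W ω ∂μ) + η * (∫ ω, Z ω ^ 2 ∂μ)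
        + κ * ∫ ω, lam ω ^ 2 ∂μ := by
    rw [hlam'_def]
    have : (fun ω => Z ω * (W ω + η * Z ω + κ * lam ω))
        = fun ω => Z ω * W ω + η * Z ω ^ 2 + κ * (Z ω * lam ω) := by
      funext ω; ring
    rw [this, integral_add
        (by exact hZW_int.add (hZsq_int.const_mul η) :
          Integrable (fun ω => Z ω * W ω + η * Z ω ^ 2) μ)
        (by exact hZlam_int.const_mul κ : Integrable (fun ω => κ * (Z ω * lam ω)) μ),
      integral_add hZW_int
        (by exact hZsq_int.const_mul η : Integrable (fun ω => η * Z ω ^ 2) μ),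
      integral_const_mul, integral_const_mul, hEZW, hEZlam]
  have hvar : variance Z μ = (∫ ω, Z ω ^ 2 ∂μ) - (∫ ω, Z ω ∂μ) ^ 2 := by
    rw [variance_eq_sub hZ_L2]
    rfl
  rw [hEZZ', hexp, hEZ', hvar, hEZ, hEZsq]
  ring
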